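/- Let A ∈ M_n(ℍ) and let λ₁, …, λ_n ∈ ℂ be standard eigenvalues of A. Then for every z ∈ ℂ, |det_ℍ(I + zA)| = |det(I_{2n} + z·χ_A)| ≤ exp(2|z| ∑_{k=1}^n |λ_k|). -/

import Mathlib

open Matrix Polynomial

lemma charpoly_eval' {m : Type*} [Fintype m] [DecidableEq m] (B : Matrix m m ℂ) (x : ℂ) :
    B.charpoly.eval x = (x • (1 : Matrix m m ℂ) - B).det := by
  rw [Matrix.charpoly, _root_.eval_det, matPolyEquiv_charmatrix, eval_sub, eval_X, eval_C]
  congr 1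
  ext i j
  simp [Matrix.scalar, Matrix.smul_apply, Matrix.one_apply, Matrix.diagonal_apply, Pi.algebraMap_apply, Algebra.algebraMap_self_apply]

lemma det_factor {n : ℕ} (B : Matrix (Fin n ⊕ Fin n) (Fin n ⊕ Fin n) ℂ) (lam : Fin n → ℂ)
    (h : B.charpoly = ∏ k, ((X - C (lam k)) * (X - C ((starRingEnd ℂ) (lam k))))) (z : ℂ) :
    (1 + z • B).det = ∏ k, ((1 + z * lam k) * (1 + z * (starRingEnd ℂ) (lam k))) := by
  by_cases hz : z = 0
  · simp [hz]
  have card : Fintype.card (Fin n ⊕ Fin n) = n + n := by simp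
  have e1 : (1 : Matrix (Fin n ⊕ Fin n) (Fin n ⊕ Fin n) ℂ) + z • B
      = z • ((-(-z⁻¹ • (1 : Matrix (Fin n ⊕ Fin n) (Fin n ⊕ Fin n) ℂ) - B))) := by
    rw [neg_sub, smul_sub, smul_smul, mul_neg, mul_inv_cancel₀ hz]
    simp [sub_neg_eq_add, add_comm]
  have e2 : B.charpoly.eval (-z⁻¹) = ∏ k, ((-z⁻¹ - lam k) * (-z⁻¹ - (starRingEnd ℂ) (lam k))) := by
    rw [h, eval_prod]
    simp [eval_mul, eval_sub]
  have key : ∀ a b : ℂ, (z * z) * ((-z⁻¹ - a) * (-z⁻¹ - b)) = (1 + z * a) * (1 + z * b) := by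
    intro a b; field_simp; ring
  rw [e1, det_smul, det_neg, ← charpoly_eval', e2, card]
  rw [show (-1 : ℂ) ^ (n + n) = 1 by rw [← two_mul, pow_mul]; norm_num, one_mul]
  rw [show z ^ (n + n) = ∏ _k : Fin n, (z * z) by
    simp [Finset.prod_const, ← two_mul, pow_mul, sq]]
  rw [← Finset.prod_mul_distrib]
  exact Finset.prod_congr rfl fun k _ => key _ _

/-- The first complex component of a quaternion `q = α + β j`:  `α = re + imI * i`. -/
noncomputable def qC1 (q : Quaternion ℝ) : ℂ := ⟨q.re, q.imI⟩

/-- The second complex component of a quaternion `q = α + β j`:  `β = imJ + imK * i`. -/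
noncomputable def qC2 (q : Quaternion ℝ) : ℂ := ⟨q.imJ, q.imK⟩

/-- The companion matrix `χ_A = [[A₁, A₂], [-conj A₂, conj A₁]]` of a quaternionic matrix
`A = A₁ + A₂ j`. -/
noncomputable def companion {n : ℕ} (A : Matrix (Fin n) (Fin n) (Quaternion ℝ)) :
    Matrix (Fin n ⊕ Fin n) (Fin n ⊕ Fin n) ℂ :=
  Matrix.fromBlocks (A.map qC1) (A.map qC2)
    (-(A.map fun q => (starRingEnd ℂ) (qC2 q))) (A.map fun q => (starRingEnd ℂ) (qC1 q))

/-- `lam` is a family of standard eigenvalues of the quaternionic matrix `A`: each has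
nonnegative imaginary part and the characteristic polynomial of `χ_A` is
`∏ k, (X - λ k) (X - conj (λ k))`. -/
noncomputable def IsStdEigenvalues {n : ℕ} (A : Matrix (Fin n) (Fin n) (Quaternion ℝ))
    (lam : Fin n → ℂ) : Prop :=
  (∀ k, 0 ≤ (lam k).im) ∧
    (companion A).charpoly =
      ∏ k, ((X - C (lam k)) * (X - C ((starRingEnd ℂ) (lam k))))

/-- Exponential bound on the quaternionic Fredholm determinant:
`|det(I_{2n} + z χ_A)| ≤ exp(2 |z| ∑_k |λ_k|)` over the standard eigenvalues of `A`. -/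
theorem abs_det_companion_le {n : ℕ} (A : Matrix (Fin n) (Fin n) (Quaternion ℝ))
    (lam : Fin n → ℂ) (hlam : IsStdEigenvalues A lam) (z : ℂ) :
    ‖Matrix.det (1 + z • companion A)‖ ≤
      Real.exp (2 * ‖z‖ * ∑ k, ‖lam k‖) := by
  obtain ⟨-, hcp⟩ := hlam
  rw [det_factor (companion A) lam hcp z, norm_prod]
  have h1 : ∀ w : ℂ, ‖1 + w‖ ≤ Real.exp ‖w‖ := fun w =>
    (norm_add_le 1 w).trans (by
      rw [norm_one, add_comm]
      exact Real.add_one_le_exp ‖w‖)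
  have hb : ∀ k : Fin n, ‖(1 + z * lam k) * (1 + z * (starRingEnd ℂ) (lam k))‖
      ≤ Real.exp (2 * ‖z‖ * ‖lam k‖) := by
    intro k
    rw [norm_mul]
    calc ‖1 + z * lam k‖ * ‖1 + z * (starRingEnd ℂ) (lam k)‖
        ≤ Real.exp ‖z * lam k‖ * Real.exp ‖z * (starRingEnd ℂ) (lam k)‖ :=
          mul_le_mul (h1 _) (h1 _) (norm_nonneg _) (Real.exp_nonneg _)
      _ = Real.exp (2 * ‖z‖ * ‖lam k‖) := by
          rw [← Real.exp_add]
          congr 1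
          simp [norm_mul, Complex.norm_conj]
          ring
  calc ∏ k, ‖(1 + z * lam k) * (1 + z * (starRingEnd ℂ) (lam k))‖
      ≤ ∏ k, Real.exp (2 * ‖z‖ * ‖lam k‖) :=
        Finset.prod_le_prod (fun k _ => norm_nonneg _) (fun k _ => hb k)
    _ = Real.exp (∑ k, 2 * ‖z‖ * ‖lam k‖) := by
        rw [Real.exp_sum]
    _ = Real.exp (2 * ‖z‖ * ∑ k, ‖lam k‖) := by
        rw [← Finset.mul_sum]
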